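/- For an ideal I of C(X) where X is a P-space, the following are equivalent: (a) I is countable strongly annihilated; (b) Z[I] is closed under countable intersection; (c) I satisfies the countable strong annihilator condition (for every countable S ⊆ I there exists f ∈ I with Ann(S) = Ann(f)). -/
import Mathlib

open ContinuousMap

section Aux

variable {X : Type*} [TopologicalSpace X]

lemma csa_mul_eq_zero_iff (c a : C(X, ℝ)) : c * a = 0 ↔ ∀ x, c x * a x = 0 := by
  constructor
  · intro h x
    have := ContinuousMap.ext_iff.mp h x
    simpa using this
  · intro h
    ext x
    simpa using h x

lemma csa_sep [CompletelyRegularSpace X]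
    {U : Set X} (hU : IsOpen U) {x : X} (hx : x ∈ U) :
    ∃ c : C(X, ℝ), c x = 1 ∧ ∀ y ∉ U, c y = 0 := by
  obtain ⟨f, hf, hfx, hfK⟩ := CompletelyRegularSpace.completely_regular x Uᶜ hU.isClosed_compl
    (by simpa using hx)
  refine ⟨⟨fun y => 1 - (f y : ℝ), by continuity⟩, ?_, ?_⟩
  · simp [hfx]
  · intro y hy
    have : f y = 1 := hfK hy
    simp [this]

lemma csa_series (f : ℕ → C(X, ℝ)) :
    ∃ k : C(X, ℝ), {x | k x = 0} = ⋂ n, {x | f n x = 0} := by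
  set t : ℕ → X → ℝ := fun n x => (1/2 : ℝ)^n * min |f n x| 1 with ht
  have htc : ∀ n, Continuous (t n) := fun n => by fun_prop
  have htnn : ∀ n x, 0 ≤ t n x := fun n x =>
    mul_nonneg (by positivity) (le_min (abs_nonneg _) zero_le_one)
  have htle : ∀ n x, ‖t n x‖ ≤ (1/2 : ℝ)^n := by
    intro n x
    rw [Real.norm_eq_abs, abs_of_nonneg (htnn n x)]
    calc t n x ≤ (1/2:ℝ)^n * 1 := by
          apply mul_le_mul_of_nonneg_left (min_le_right _ _) (by positivity)
      _ = (1/2:ℝ)^n := mul_one _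
  have hsum : Summable (fun n : ℕ => (1/2 : ℝ)^n) :=
    summable_geometric_of_lt_one (by norm_num) (by norm_num)
  have hksum : ∀ x, Summable (fun n => t n x) := fun x =>
    Summable.of_nonneg_of_le (fun n => htnn n x) (fun n => by
      simpa [abs_of_nonneg (htnn n x)] using htle n x) hsum
  have hcont : Continuous (fun x => ∑' n, t n x) := continuous_tsum htc hsum htle
  refine ⟨⟨_, hcont⟩, ?_⟩
  ext x
  simp only [Set.mem_setOf_eq, Set.mem_iInter, ContinuousMap.coe_mk]
  constructor
  · intro h0 n
    have hle : t n x ≤ ∑' m, t m x := Summable.le_tsum (hksum x) n (fun m _ => htnn m x)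
    have ht0 : t n x = 0 := le_antisymm (h0 ▸ hle) (htnn n x)
    have hpow : (1/2:ℝ)^n ≠ 0 := by positivity
    have hmin : min |f n x| 1 = 0 := by
      rcases mul_eq_zero.mp ht0 with h | h
      · exact absurd h hpow
      · exact h
    have : |f n x| = 0 := by
      rcases min_eq_iff.mp hmin with ⟨h, _⟩ | ⟨h, _⟩
      · exact h
      · linarith
    exact abs_eq_zero.mp this
  · intro h
    have : ∀ n, t n x = 0 := by
      intro n
      simp [ht, h n]
    simp [tsum_congr (fun n => this n)]

lemma csa_div (g b : C(X, ℝ))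
    (hZ : IsOpen {x | g x = 0}) (hzb : ∀ x, g x = 0 → b x = 0) :
    ∃ h : C(X, ℝ), h * g = b := by
  have hcont : Continuous (fun x => b x * (g x)⁻¹) := by
    rw [continuous_iff_continuousAt]
    intro x
    by_cases hx : g x = 0
    · have hev : (fun y => b y * (g y)⁻¹) =ᶠ[nhds x] fun _ => (0:ℝ) := by
        filter_upwards [hZ.mem_nhds hx] with y hy
        simp [Set.mem_setOf_eq.mp hy, hzb y hy]
      exact ContinuousAt.congr continuousAt_const hev.symm
    · exact (b.continuous.continuousAt).mul ((g.continuous.continuousAt).inv₀ hx)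
  refine ⟨⟨_, hcont⟩, ?_⟩
  ext x
  by_cases hx : g x = 0
  · simp [hx, hzb x hx]
  · simp [mul_assoc, inv_mul_cancel₀ hx]

end Aux

/-- An ideal `I` is countable strongly annihilated if for each countable subset `S ⊆ I`
and each `b ∉ I` there exists `c` with `c * a = 0` for all `a ∈ S` but `c * b ≠ 0`. -/
def CountableStronglyAnnihilated {R : Type*} [CommRing R] (I : Ideal R) : Prop :=
  ∀ S : Set R, S.Countable → S ⊆ I → ∀ b ∉ I, ∃ c : R, (∀ a ∈ S, c * a = 0) ∧ c * b ≠ 0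

/-- For an ideal `I` of `C(X)` over a P-space `X` (every zero-set is open), the
following are equivalent: (a) `I` is countable strongly annihilated; (b) `Z[I]` is
closed under countable intersection; (c) `I` satisfies the countable strong
annihilator condition. -/
theorem stmt17 {X : Type*} [TopologicalSpace X] [T2Space X] [CompletelyRegularSpace X]
    (hP : ∀ f : C(X, ℝ), IsOpen {x | f x = 0}) (I : Ideal C(X, ℝ)) :
    (CountableStronglyAnnihilated I ↔
      (∀ f : ℕ → C(X, ℝ), (∀ n, f n ∈ I) →
        ∃ g ∈ I, {x | g x = 0} = ⋂ n, {x | f n x = 0})) ∧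
    ((∀ f : ℕ → C(X, ℝ), (∀ n, f n ∈ I) →
        ∃ g ∈ I, {x | g x = 0} = ⋂ n, {x | f n x = 0}) ↔
      (∀ S : Set C(X, ℝ), S.Countable → S ⊆ I →
        ∃ f ∈ I, {h : C(X, ℝ) | ∀ s ∈ S, h * s = 0} = {h : C(X, ℝ) | h * f = 0})) := by
  constructor
  · constructor
    · -- (a) → (b)
      intro ha f hf
      obtain ⟨k, hkZ⟩ := csa_series f
      refine ⟨k, ?_, hkZ⟩
      by_contra hkI
      obtain ⟨c, hcS, hck⟩ := ha (Set.range f) (Set.countable_range f)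
        (by rintro _ ⟨n, rfl⟩; exact hf n) k hkI
      apply hck
      rw [csa_mul_eq_zero_iff]
      intro x
      by_cases hcx : c x = 0
      · simp [hcx]
      · have hx : x ∈ ⋂ n, {x | f n x = 0} := by
          simp only [Set.mem_iInter, Set.mem_setOf_eq]
          intro n
          have := (csa_mul_eq_zero_iff c (f n)).mp (hcS (f n) ⟨n, rfl⟩) x
          rcases mul_eq_zero.mp this with h | h
          · exact absurd h hcx
          · exact h
        have : k x = 0 := by rw [← hkZ] at hx; exact hx
        simp [this]
    · -- (b) → (a)
      intro hb S hSc hSI b hbI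
      by_contra hc
      push_neg at hc
      -- hc : ∀ c, (∀ a ∈ S, c * a = 0) → c * b = 0
      rcases S.eq_empty_or_nonempty with rfl | hSne
      · have hbb : b * b = 0 := hc b (by simp)
        have : b = 0 := by
          ext x
          have := (csa_mul_eq_zero_iff b b).mp hbb x
          have : b x = 0 := by
            rcases mul_eq_zero.mp this with h | h <;> exact h
          simpa using this
        exact hbI (this ▸ I.zero_mem)
      · obtain ⟨f, hfS⟩ := Set.Countable.exists_eq_range hSc hSne
        obtain ⟨g, hgI, hgZ⟩ := hb f (fun n => hSI (by rw [hfS]; exact ⟨n, rfl⟩))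
        -- b vanishes on Z(g)
        have hzb : ∀ x, g x = 0 → b x = 0 := by
          intro x hx
          obtain ⟨c, hcx, hc0⟩ := csa_sep (hP g) (show x ∈ {x | g x = 0} from hx)
          have hcS : ∀ a ∈ S, c * a = 0 := by
            intro a ha
            rw [hfS] at ha
            obtain ⟨n, rfl⟩ := ha
            rw [csa_mul_eq_zero_iff]
            intro y
            by_cases hcy : c y = 0
            · simp [hcy]
            · have hy : g y = 0 := by
                by_contra hgy
                exact hcy (hc0 y hgy)
              have : y ∈ ⋂ n, {x | f n x = 0} := by rw [← hgZ]; exact hy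
              have := Set.mem_iInter.mp this n
              simp only [Set.mem_setOf_eq] at this
              simp [this]
          have := (csa_mul_eq_zero_iff c b).mp (hc c hcS) x
          rw [hcx, one_mul] at this
          exact this
        obtain ⟨h, hh⟩ := csa_div g b (hP g) hzb
        exact hbI (hh ▸ I.mul_mem_left h hgI)
  · constructor
    · -- (b) → (c)
      intro hb S hSc hSI
      rcases S.eq_empty_or_nonempty with rfl | hSne
      · exact ⟨0, I.zero_mem, by ext h; simp⟩
      · obtain ⟨f, hfS⟩ := Set.Countable.exists_eq_range hSc hSne
        obtain ⟨g, hgI, hgZ⟩ := hb f (fun n => hSI (by rw [hfS]; exact ⟨n, rfl⟩))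
        refine ⟨g, hgI, ?_⟩
        ext h
        simp only [Set.mem_setOf_eq]
        constructor
        · intro hS
          rw [csa_mul_eq_zero_iff]
          intro x
          by_cases hhx : h x = 0
          · simp [hhx]
          · have : x ∈ ⋂ n, {x | f n x = 0} := by
              simp only [Set.mem_iInter, Set.mem_setOf_eq]
              intro n
              have := (csa_mul_eq_zero_iff h (f n)).mp (hS (f n) (by rw [hfS]; exact ⟨n, rfl⟩)) x
              rcases mul_eq_zero.mp this with h' | h'
              · exact absurd h' hhx
              · exact h'
            have : g x = 0 := by rw [← hgZ] at this; exact this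
            simp [this]
        · intro hg a ha
          rw [hfS] at ha
          obtain ⟨n, rfl⟩ := ha
          rw [csa_mul_eq_zero_iff]
          intro x
          by_cases hhx : h x = 0
          · simp [hhx]
          · have hgx : g x = 0 := by
              have := (csa_mul_eq_zero_iff h g).mp hg x
              rcases mul_eq_zero.mp this with h' | h'
              · exact absurd h' hhx
              · exact h'
            have : x ∈ ⋂ n, {x | f n x = 0} := by rw [← hgZ]; exact hgx
            have := Set.mem_iInter.mp this n
            simp only [Set.mem_setOf_eq] at this
            simp [this]
    · -- (c) → (b)
      intro hcnd f hf
      obtain ⟨g, hgI, hAnn⟩ := hcnd (Set.range f) (Set.countable_range f)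
        (by rintro _ ⟨n, rfl⟩; exact hf n)
      refine ⟨g, hgI, ?_⟩
      obtain ⟨k, hkZ⟩ := csa_series f
      have hUopen : IsOpen (⋂ n, {x | f n x = 0}) := hkZ ▸ hP k
      have hAnn' : ∀ c : C(X, ℝ), (∀ s ∈ Set.range f, c * s = 0) ↔ c * g = 0 := by
        intro c
        constructor
        · intro h
          have : c ∈ {h : C(X, ℝ) | h * g = 0} := by rw [← hAnn]; exact h
          exact this
        · intro h s hs
          have : c ∈ {h : C(X, ℝ) | ∀ s ∈ Set.range f, h * s = 0} := by rw [hAnn]; exact h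
          exact this s hs
      ext x
      simp only [Set.mem_setOf_eq, Set.mem_iInter]
      constructor
      · -- Z(g) ⊆ ⋂ Z(f n)
        intro hgx n
        obtain ⟨c, hcx, hc0⟩ := csa_sep (hP g) (show x ∈ {x | g x = 0} from hgx)
        have hcg : c * g = 0 := by
          rw [csa_mul_eq_zero_iff]
          intro y
          by_cases hcy : c y = 0
          · simp [hcy]
          · have : g y = 0 := by
              by_contra hgy
              exact hcy (hc0 y hgy)
            simp [this]
        have := (csa_mul_eq_zero_iff c (f n)).mp ((hAnn' c).mpr hcg (f n) ⟨n, rfl⟩) x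
        rw [hcx, one_mul] at this
        exact this
      · -- ⋂ Z(f n) ⊆ Z(g)
        intro hx
        obtain ⟨c, hcx, hc0⟩ := csa_sep hUopen
          (show x ∈ ⋂ n, {x | f n x = 0} from Set.mem_iInter.mpr hx)
        have hcS : ∀ s ∈ Set.range f, c * s = 0 := by
          rintro _ ⟨n, rfl⟩
          rw [csa_mul_eq_zero_iff]
          intro y
          by_cases hcy : c y = 0
          · simp [hcy]
          · have hy : y ∈ ⋂ m, {x | f m x = 0} := by
              by_contra hyn
              exact hcy (hc0 y hyn)
            have := Set.mem_iInter.mp hy n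
            simp only [Set.mem_setOf_eq] at this
            simp [this]
        have := (csa_mul_eq_zero_iff c g).mp ((hAnn' c).mp hcS) x
        rw [hcx, one_mul] at this
        exact this
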